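/- Let t_0 ∈ ℕ and t_1, t_2, t_3 positive integers, and let D = TE(T^-, [t_0, t_1, t_2, t_3]) be the digraph obtained by expanding each vertex of the negative triangle into a class of twins of sizes t_1, t_2, t_3 and adding t_0 isolated vertices. Then the characteristic polynomial of the Hermitian adjacency matrix of D equals μ^{n-3}(μ^3 - (t_1 t_2 + t_1 t_3 + t_2 t_3)μ + 2 t_1 t_2 t_3), where n = t_0 + t_1 + t_2 + t_3. -/
import Mathlib


open Complex Matrix Polynomial

/-- Hermitian adjacency matrix of the negative triangle `T⁻`. -/
def negTriangleH : Matrix (Fin 3) (Fin 3) ℂ := !![0, 1, I; 1, 0, -I; -I, I, 0]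

/-- Index type of the twin expansion `TE(T⁻, [t₀, t₁, t₂, t₃])`:
`t₀` isolated vertices and twin classes of sizes `t₁, t₂, t₃`. -/
abbrev TETriIdx (t₀ t₁ t₂ t₃ : ℕ) := Fin t₀ ⊕ (Fin t₁ ⊕ Fin t₂ ⊕ Fin t₃)

/-- The class of a vertex of the twin expansion: `none` for isolated vertices,
`some u` for a twin of vertex `u` of `T⁻`. -/
def triClass {t₀ t₁ t₂ t₃ : ℕ} : TETriIdx t₀ t₁ t₂ t₃ → Option (Fin 3)
  | .inl _ => none
  | .inr (.inl _) => some 0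
  | .inr (.inr (.inl _)) => some 1
  | .inr (.inr (.inr _)) => some 2

/-- Hermitian adjacency matrix of the twin expansion `TE(T⁻, [t₀, t₁, t₂, t₃])`. -/
def TETriH (t₀ t₁ t₂ t₃ : ℕ) :
    Matrix (TETriIdx t₀ t₁ t₂ t₃) (TETriIdx t₀ t₁ t₂ t₃) ℂ :=
  Matrix.of fun x y =>
    match triClass x, triClass y with
    | some u, some v => if u = v then 0 else negTriangleH u v
    | _, _ => 0

section Aux
variable (t₀ t₁ t₂ t₃ s₁ s₂ s₃ : ℕ)

/-- The "remainder" index type: what is left after removing one representative from each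
twin class. -/
abbrev TEKap := Fin t₀ ⊕ (Fin s₁ ⊕ Fin s₂ ⊕ Fin s₃)

/-- Explicit equivalence singling out one representative of each twin class. -/
def teEquiv : (Fin 3 ⊕ TEKap t₀ s₁ s₂ s₃) ≃ TETriIdx t₀ (s₁+1) (s₂+1) (s₃+1) where
  toFun := Sum.elim
    (![.inr (.inl 0), .inr (.inr (.inl 0)), .inr (.inr (.inr 0))])
    (Sum.elim (fun k => .inl k)
      (Sum.elim (fun j => .inr (.inl j.succ))
        (Sum.elim (fun j => .inr (.inr (.inl j.succ)))
          (fun j => .inr (.inr (.inr j.succ))))))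
  invFun := Sum.elim (fun k => .inr (.inl k))
    (Sum.elim (fun i => Fin.cases (.inl 0) (fun j => .inr (.inr (.inl j))) i)
      (Sum.elim (fun i => Fin.cases (.inl 1) (fun j => .inr (.inr (.inr (.inl j)))) i)
        (fun i => Fin.cases (.inl 2) (fun j => .inr (.inr (.inr (.inr j)))) i)))
  left_inv := by
    rintro (u | (k | (j | j | j)))
    · fin_cases u <;> simp
    · rfl
    all_goals simp
  right_inv := by
    rintro (k | (i | i | i))
    · rfl
    all_goals induction i using Fin.cases <;> simp

/-- Left factor of the rank-3 factorization of `TETriH`. -/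
def Pmat : Matrix (TETriIdx t₀ t₁ t₂ t₃) (Fin 3) ℂ :=
  Matrix.of fun x u =>
    match triClass x with
    | some w => if w = u then 0 else negTriangleH w u
    | none => 0

/-- Right factor of the rank-3 factorization of `TETriH`. -/
def Qmat : Matrix (Fin 3) (TETriIdx t₀ t₁ t₂ t₃) ℂ :=
  Matrix.of fun u y => if triClass y = some u then 1 else 0

/-- `Pmat` padded by zero columns to a square matrix. -/
def Pmat' : Matrix (TETriIdx t₀ (s₁+1) (s₂+1) (s₃+1)) (TETriIdx t₀ (s₁+1) (s₂+1) (s₃+1)) ℂ :=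
  Matrix.of fun x y =>
    Sum.elim (fun u => Pmat t₀ (s₁+1) (s₂+1) (s₃+1) x u) (fun _ => 0)
      ((teEquiv t₀ s₁ s₂ s₃).symm y)

/-- `Qmat` padded by zero rows to a square matrix. -/
def Qmat' : Matrix (TETriIdx t₀ (s₁+1) (s₂+1) (s₃+1)) (TETriIdx t₀ (s₁+1) (s₂+1) (s₃+1)) ℂ :=
  Matrix.of fun x y =>
    Sum.elim (fun u => Qmat t₀ (s₁+1) (s₂+1) (s₃+1) u y) (fun _ => 0)
      ((teEquiv t₀ s₁ s₂ s₃).symm x)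

/-- The 3×3 "quotient" matrix: the triangle matrix with rows scaled by class sizes. -/
def Gmat : Matrix (Fin 3) (Fin 3) ℂ :=
  Matrix.of fun u v => if u = v then 0 else ((![t₁, t₂, t₃] u : ℕ) : ℂ) * negTriangleH u v

lemma PQ_eq : Pmat' t₀ s₁ s₂ s₃ * Qmat' t₀ s₁ s₂ s₃ = TETriH t₀ (s₁+1) (s₂+1) (s₃+1) := by
  ext x y
  rw [Matrix.mul_apply, ← Equiv.sum_comp (teEquiv t₀ s₁ s₂ s₃)]
  simp only [Pmat', Qmat', Matrix.of_apply, Equiv.symm_apply_apply]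
  rw [Fintype.sum_sum_type]
  simp only [Sum.elim_inl, Sum.elim_inr, mul_zero, Finset.sum_const_zero, add_zero, zero_mul]
  obtain (x | (x | x | x)) := x <;> obtain (y | (y | y | y)) := y <;>
    simp [Pmat, Qmat, TETriH, triClass, Fin.sum_univ_three]

lemma QP_eq : (Qmat' t₀ s₁ s₂ s₃ * Pmat' t₀ s₁ s₂ s₃).submatrix
      (teEquiv t₀ s₁ s₂ s₃) (teEquiv t₀ s₁ s₂ s₃)
    = Matrix.fromBlocks (Gmat (s₁+1) (s₂+1) (s₃+1)) 0 0 0 := by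
  ext a b
  rw [Matrix.submatrix_apply, Matrix.mul_apply]
  simp only [Qmat', Pmat', Matrix.of_apply, Equiv.symm_apply_apply]
  obtain (u | a) := a
  · obtain (v | b) := b
    · simp only [Sum.elim_inl, Matrix.fromBlocks_apply₁₁]
      rw [Fintype.sum_sum_type]
      fin_cases u <;> fin_cases v <;>
        simp [Qmat, Pmat, Gmat, triClass, Finset.sum_const, negTriangleH]
    · simp
  · obtain (v | b) := b <;> simp
end Aux

lemma charpoly_Gmat (t₁ t₂ t₃ : ℕ) :
    (Gmat t₁ t₂ t₃).charpoly
      = X ^ 3 - C ((t₁ * t₂ + t₁ * t₃ + t₂ * t₃ : ℕ) : ℂ) * X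
          + C ((2 * (t₁ * t₂ * t₃) : ℕ) : ℂ) := by
  apply Polynomial.funext
  intro μ
  rw [Matrix.charpoly, ← Polynomial.coe_evalRingHom, RingHom.map_det, Matrix.det_fin_three]
  simp [charmatrix_apply, Matrix.diagonal_apply, Gmat, negTriangleH]
  ring_nf
  simp [Complex.I_sq]
  ring_nf

lemma my_charpoly_mul_comm {n : Type*} [DecidableEq n] [Fintype n] {R : Type*} [CommRing R]
    [IsDomain R] (M N : Matrix n n R) : (M * N).charpoly = (N * M).charpoly := by
  classical
  set M' := M.map (C : R →+* R[X]) with hM'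
  set N' := N.map (C : R →+* R[X]) with hN'
  have hchar : ∀ A B : Matrix n n R, charmatrix (A * B) =
      (X : R[X]) • (1 : Matrix n n R[X]) - (A.map C) * (B.map C) := by
    intro A B
    rw [charmatrix]
    congr 1
    · simp [Matrix.scalar, Matrix.smul_one_eq_diagonal]
    · simp [RingHom.mapMatrix_apply, Matrix.map_mul]
  have key1 :
      fromBlocks (1 : Matrix n n R[X]) 0 N' 1 *
        fromBlocks ((X : R[X]) • 1) M' 0 ((X : R[X]) • 1 - N' * M') =
      fromBlocks ((X : R[X]) • 1) M' ((X : R[X]) • N') ((X : R[X]) • 1) := by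
    rw [Matrix.fromBlocks_multiply]
    congr 1 <;> simp [Matrix.mul_smul, Matrix.smul_mul]
  have key2 :
      fromBlocks ((X : R[X]) • 1 - M' * N') M' 0 ((X : R[X]) • 1) *
        fromBlocks (1 : Matrix n n R[X]) 0 N' 1 =
      fromBlocks ((X : R[X]) • 1) M' ((X : R[X]) • N') ((X : R[X]) • 1) := by
    rw [Matrix.fromBlocks_multiply]
    congr 1 <;> simp [Matrix.mul_smul, Matrix.smul_mul]
  have hdet : ((X : R[X]) ^ Fintype.card n) * ((X : R[X]) • 1 - N' * M').det
      = ((X : R[X]) ^ Fintype.card n) * ((X : R[X]) • 1 - M' * N').det := by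
    have h1 := congrArg Matrix.det key1
    have h2 := congrArg Matrix.det key2
    rw [Matrix.det_mul] at h1 h2
    rw [Matrix.det_fromBlocks_zero₁₂] at h1
    rw [Matrix.det_fromBlocks_zero₂₁] at h1 h2
    rw [Matrix.det_fromBlocks_zero₁₂] at h2
    simp only [Matrix.det_one, one_mul, mul_one, Matrix.det_smul, Matrix.det_one] at h1 h2
    rw [h1, ← h2]
    ring
  have hX : ((X : R[X]) ^ Fintype.card n) ≠ 0 := pow_ne_zero _ Polynomial.X_ne_zero
  have := mul_left_cancel₀ hX hdet
  rw [Matrix.charpoly, Matrix.charpoly, hchar, hchar, this]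

theorem stmt_15 (t₀ t₁ t₂ t₃ : ℕ) (h₁ : 0 < t₁) (h₂ : 0 < t₂) (h₃ : 0 < t₃) :
    (TETriH t₀ t₁ t₂ t₃).charpoly
      = X ^ (t₀ + t₁ + t₂ + t₃ - 3) *
        (X ^ 3 - C ((t₁ * t₂ + t₁ * t₃ + t₂ * t₃ : ℕ) : ℂ) * X
          + C ((2 * (t₁ * t₂ * t₃) : ℕ) : ℂ)) := by
  obtain ⟨s₁, rfl⟩ : ∃ s, t₁ = s + 1 := ⟨t₁ - 1, by omega⟩
  obtain ⟨s₂, rfl⟩ : ∃ s, t₂ = s + 1 := ⟨t₂ - 1, by omega⟩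
  obtain ⟨s₃, rfl⟩ : ∃ s, t₃ = s + 1 := ⟨t₃ - 1, by omega⟩
  have h0 : (0 : Matrix (TEKap t₀ s₁ s₂ s₃) (TEKap t₀ s₁ s₂ s₃) ℂ).charpoly
      = X ^ (t₀ + (s₁ + (s₂ + s₃))) := by
    rw [Matrix.charpoly]
    have hc : charmatrix (0 : Matrix (TEKap t₀ s₁ s₂ s₃) (TEKap t₀ s₁ s₂ s₃) ℂ)
        = Matrix.diagonal fun _ => (X : ℂ[X]) := by
      ext i j
      by_cases h : i = j <;> simp [h, Matrix.diagonal_apply]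
    rw [hc, Matrix.det_diagonal]
    simp [Finset.prod_const]
  have hexp : t₀ + (s₁ + 1) + (s₂ + 1) + (s₃ + 1) - 3 = t₀ + (s₁ + (s₂ + s₃)) := by omega
  calc (TETriH t₀ (s₁+1) (s₂+1) (s₃+1)).charpoly
      = (Pmat' t₀ s₁ s₂ s₃ * Qmat' t₀ s₁ s₂ s₃).charpoly := by rw [PQ_eq]
    _ = (Qmat' t₀ s₁ s₂ s₃ * Pmat' t₀ s₁ s₂ s₃).charpoly := my_charpoly_mul_comm _ _
    _ = ((Qmat' t₀ s₁ s₂ s₃ * Pmat' t₀ s₁ s₂ s₃).submatrix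
          (teEquiv t₀ s₁ s₂ s₃) (teEquiv t₀ s₁ s₂ s₃)).charpoly := by
        rw [← Matrix.charpoly_reindex (teEquiv t₀ s₁ s₂ s₃).symm
          (Qmat' t₀ s₁ s₂ s₃ * Pmat' t₀ s₁ s₂ s₃)]
        rw [Matrix.reindex_apply, Equiv.symm_symm]
    _ = X ^ (t₀ + (s₁ + 1) + (s₂ + 1) + (s₃ + 1) - 3) *
        (X ^ 3 - C (((s₁+1) * (s₂+1) + (s₁+1) * (s₃+1) + (s₂+1) * (s₃+1) : ℕ) : ℂ) * X
          + C ((2 * ((s₁+1) * (s₂+1) * (s₃+1)) : ℕ) : ℂ)) := by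
        rw [QP_eq, Matrix.charpoly_fromBlocks_zero₂₁, h0, charpoly_Gmat, hexp, mul_comm]
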